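/- For every LDQL query q there exists an LDQL query q' such that q ≡ q' (their S-based evaluations coincide for every Web of Linked Data W and every finite set S of URIs) and every link path expression occurring in q' is built only from the symbol ε, the construction ⟨?v,q⟩, and the operator (·)* (i.e., q' uses no link patterns, no concatenation /, no disjunction |, and no test [·] in its LPEs). -/

import Mathlib

namespace LDQLFormal

noncomputable section
open Classical

/-! ### Basic RDF model -/

abbrev URI := ℕ
abbrev BNodeId := ℕ
abbrev LitId := ℕ
abbrev Var := ℕ
abbrev Doc := ℕ

/-- Subject terms: URIs or blank nodes. -/
inductive Subj where
  | uri (u : URI)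
  | bnode (b : BNodeId)
deriving DecidableEq

/-- RDF terms (objects): URIs, blank nodes, or literals. -/
inductive Obj where
  | uri (u : URI)
  | bnode (b : BNodeId)
  | lit (l : LitId)
deriving DecidableEq

structure RDFTriple where
  s : Subj
  p : URI
  o : Obj
deriving DecidableEq

def Subj.toObj : Subj → Obj
  | .uri u => .uri u
  | .bnode b => .bnode b

/-- The set of URIs occurring in an RDF triple. -/
def urisOf (t : RDFTriple) : Set URI :=
  {u | t.s = .uri u ∨ t.p = u ∨ t.o = .uri u}

/-- A Web of Linked Data: a finite set of documents, the data in each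
document (a finite set of RDF triples), and a surjective partial function
`adoc` from URIs to documents. -/
structure Web where
  docs : Set Doc
  finite_docs : docs.Finite
  data : Doc → Finset RDFTriple
  adoc : URI → Option Doc
  adoc_mem : ∀ u d, adoc u = some d → d ∈ docs
  adoc_surj : ∀ d ∈ docs, ∃ u, adoc u = some d

/-- Link graph edge `(d, (t,u), d')`. -/
def Web.edge (W : Web) (d : Doc) (t : RDFTriple) (u : URI) (d' : Doc) : Prop :=
  d ∈ W.docs ∧ t ∈ W.data d ∧ u ∈ urisOf t ∧ W.adoc u = some d'

/-! ### Link patterns -/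

/-- Components of a link pattern drawn from `U ∪ {*, +}`. -/
inductive LPUP where
  | uri (u : URI)
  | star
  | plus
deriving DecidableEq

/-- Components of a link pattern drawn from `U ∪ Lit ∪ {*, +}`. -/
inductive LPULP where
  | uri (u : URI)
  | lit (l : LitId)
  | star
  | plus
deriving DecidableEq

structure LinkPattern where
  c1 : LPUP
  c2 : LPUP
  c3 : LPULP

def matchSubj (y : LPUP) (uctx : URI) (x : Subj) : Prop :=
  match y with
  | .uri w => x = .uri w
  | .star => True
  | .plus => x = .uri uctx

def matchPred (y : LPUP) (uctx : URI) (x : URI) : Prop :=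
  match y with
  | .uri w => x = w
  | .star => True
  | .plus => x = uctx

def matchObj (y : LPULP) (uctx : URI) (x : Obj) : Prop :=
  match y with
  | .uri w => x = .uri w
  | .lit l => x = .lit l
  | .star => True
  | .plus => x = .uri uctx

/-- An edge with label `(t,u)` matches a link pattern in the context of `uctx`. -/
def lpMatch (lp : LinkPattern) (uctx : URI) (t : RDFTriple) (u : URI) : Prop :=
  ((lp.c1 = .star ∧ t.s = .uri u) ∨ (lp.c2 = .star ∧ t.p = u) ∨ (lp.c3 = .star ∧ t.o = .uri u))
  ∧ matchSubj lp.c1 uctx t.s ∧ matchPred lp.c2 uctx t.p ∧ matchObj lp.c3 uctx t.o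

/-! ### Solution mappings -/

abbrev Mapping := Var → Option Obj

def mdom (μ : Mapping) : Set Var := {v | μ v ≠ none}

def emptyMap : Mapping := fun _ => none

def single (v : Var) (o : Obj) : Mapping := fun w => if w = v then some o else none

def compatible (μ1 μ2 : Mapping) : Prop :=
  ∀ v a b, μ1 v = some a → μ2 v = some b → a = b

def munion (μ1 μ2 : Mapping) : Mapping := fun v =>
  match μ1 v with
  | some a => some a
  | none => μ2 v

/-- Join of two sets of solution mappings. -/
def mjoin (Ω1 Ω2 : Set Mapping) : Set Mapping :=
  {μ | ∃ μ1 ∈ Ω1, ∃ μ2 ∈ Ω2, compatible μ1 μ2 ∧ μ = munion μ1 μ2}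

/-- Restriction of a mapping to a finite set of variables. -/
def restrictV (V : Finset Var) (μ : Mapping) : Mapping := fun v =>
  if v ∈ V then μ v else none

/-! ### SPARQL graph patterns -/

inductive PTerm where
  | var (v : Var)
  | term (o : Obj)
deriving DecidableEq

structure TriplePattern where
  sj : PTerm
  pr : PTerm
  ob : PTerm
deriving DecidableEq

def PTerm.varsOf : PTerm → Set Var
  | .var v => {v}
  | .term _ => ∅

def TriplePattern.varsOf (t : TriplePattern) : Set Var :=
  t.sj.varsOf ∪ t.pr.varsOf ∪ t.ob.varsOf

def pval (μ : Mapping) : PTerm → Option Obj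
  | .var v => μ v
  | .term o => some o

def objToSubj : Obj → Option Subj
  | .uri u => some (.uri u)
  | .bnode b => some (.bnode b)
  | .lit _ => none

def objToURI : Obj → Option URI
  | .uri u => some u
  | _ => none

/-- `tpInst μ tp = some t` iff `μ[tp] = t` (all variables of `tp` bound by `μ`
and the instantiation is a well-formed RDF triple). -/
def tpInst (μ : Mapping) (t : TriplePattern) : Option RDFTriple := do
  let s ← pval μ t.sj
  let s' ← objToSubj s
  let p ← pval μ t.pr
  let p' ← objToURI p
  let o ← pval μ t.ob
  return ⟨s', p', o⟩

/-- Filter conditions. -/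
inductive Cond where
  | eq (a b : PTerm)
  | neq (a b : PTerm)
  | and (c1 c2 : Cond)
  | or (c1 c2 : Cond)
  | not (c : Cond)

def condHolds (μ : Mapping) : Cond → Prop
  | .eq a b => ∃ x, pval μ a = some x ∧ pval μ b = some x
  | .neq a b => ∃ x y, pval μ a = some x ∧ pval μ b = some y ∧ x ≠ y
  | .and c1 c2 => condHolds μ c1 ∧ condHolds μ c2
  | .or c1 c2 => condHolds μ c1 ∨ condHolds μ c2
  | .not c => ¬ condHolds μ c

/-- SPARQL graph patterns, built from triple patterns with
AND, UNION, OPT, FILTER, GRAPH and BIND. -/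
inductive GP where
  | empty
  | tp (t : TriplePattern)
  | and (g1 g2 : GP)
  | union (g1 g2 : GP)
  | opt (g1 g2 : GP)
  | filter (g : GP) (c : Cond)
  | graphU (u : URI) (g : GP)
  | graphV (v : Var) (g : GP)
  | bind (g : GP) (o : Obj) (v : Var)

/-- An RDF dataset: a default graph together with named graphs. -/
structure RDFDataset where
  dflt : Set RDFTriple
  named : URI → Option (Set RDFTriple)

/-- Standard set-based SPARQL evaluation of a graph pattern over an RDF
dataset `D` with active graph `G`. -/
def evalGP (D : RDFDataset) : GP → Set RDFTriple → Set Mapping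
  | .empty, _ => {emptyMap}
  | .tp t, G => {μ | mdom μ = t.varsOf ∧ ∃ tr ∈ G, tpInst μ t = some tr}
  | .and g1 g2, G => mjoin (evalGP D g1 G) (evalGP D g2 G)
  | .union g1 g2, G => evalGP D g1 G ∪ evalGP D g2 G
  | .opt g1 g2, G =>
      mjoin (evalGP D g1 G) (evalGP D g2 G) ∪
        {μ | μ ∈ evalGP D g1 G ∧ ∀ μ2 ∈ evalGP D g2 G, ¬ compatible μ μ2}
  | .filter g c, G => {μ | μ ∈ evalGP D g G ∧ condHolds μ c}
  | .graphU u g, _ => {μ | ∃ G', D.named u = some G' ∧ μ ∈ evalGP D g G'}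
  | .graphV v g, _ =>
      {μ | ∃ u G', D.named u = some G' ∧ ∃ μ' ∈ evalGP D g G',
            compatible μ' (single v (.uri u)) ∧ μ = munion μ' (single v (.uri u))}
  | .bind g o v, G => {μ' | ∃ μ ∈ evalGP D g G, μ v = none ∧ μ' = munion μ (single v o)}

/-! ### LDQL syntax -/

mutual
/-- LDQL queries. -/
inductive LDQL where
  | base (l : LPE) (P : GP)
  | seedU (U0 : Finset URI) (q : LDQL)
  | seedV (v : Var) (q : LDQL)
  | qand (q1 q2 : LDQL)
  | qunion (q1 q2 : LDQL)
  | proj (V0 : Finset Var) (q : LDQL)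

/-- Link path expressions. -/
inductive LPE where
  | eps
  | pat (lp : LinkPattern)
  | seq (l1 l2 : LPE)
  | alt (l1 l2 : LPE)
  | star (l : LPE)
  | test (l : LPE)
  | sub (v : Var) (q : LDQL)
end

/-- `dataset_W(U0)`. -/
def datasetW (W : Web) (U0 : Set URI) : RDFDataset where
  dflt := {t | ∃ u ∈ U0, ∃ d, W.adoc u = some d ∧ t ∈ W.data d}
  named := fun u =>
    if u ∈ U0 then (W.adoc u).map (fun d => ((W.data d : Finset RDFTriple) : Set RDFTriple))
    else none

/-! ### LDQL semantics -/

mutual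
/-- The S-based evaluation `⟦q⟧_W^S` of an LDQL query. -/
def evalQ (W : Web) : LDQL → Set URI → Set Mapping
  | .base l P, S =>
      evalGP (datasetW W {u' | ∃ u ∈ S, u' ∈ evalL W l u}) P
        (datasetW W {u' | ∃ u ∈ S, u' ∈ evalL W l u}).dflt
  | .seedU U0 q, _ => evalQ W q ↑U0
  | .seedV v q, _ => ⋃ u : URI, mjoin (evalQ W q {u}) {single v (.uri u)}
  | .qand q1 q2, S => mjoin (evalQ W q1 S) (evalQ W q2 S)
  | .qunion q1 q2, S => evalQ W q1 S ∪ evalQ W q2 S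
  | .proj V0 q, S => (restrictV V0) '' (evalQ W q S)

/-- The `uctx`-based evaluation `⟦l⟧_W^uctx` of a link path expression. -/
def evalL (W : Web) : LPE → URI → Set URI
  | .eps, u => if (W.adoc u).isSome then {u} else ∅
  | .pat lp, u =>
      {u' | ∃ d, W.adoc u = some d ∧ ∃ t d', W.edge d t u' d' ∧ lpMatch lp u t u'}
  | .seq l1 l2, u => {u'' | ∃ u', u' ∈ evalL W l1 u ∧ u'' ∈ evalL W l2 u'}
  | .alt l1 l2, u => evalL W l1 u ∪ evalL W l2 u
  | .star l, u =>
      {u' | (W.adoc u).isSome ∧ Relation.ReflTransGen (fun a b => b ∈ evalL W l a) u u'}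
  | .test l, u => {u' | u' = u ∧ evalL W l u ≠ ∅}
  | .sub v q, u =>
      {u' | (W.adoc u).isSome ∧ ∃ μ ∈ evalQ W q {u}, μ v = some (.uri u')}
end

/-- Semantic equivalence of LDQL queries. -/
def equivQ (q q' : LDQL) : Prop :=
  ∀ (W : Web) (S : Set URI), S.Finite → evalQ W q S = evalQ W q' S


/-! ### LPEs built only from ε, ⟨?v,q⟩ and (·)* -/

mutual
/-- All LPEs occurring in the query consist only of `ε`, `⟨?v,q⟩` and `(·)*`. -/
def LDQL.simple : LDQL → Prop
  | .base l _ => l.simple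
  | .seedU _ q => q.simple
  | .seedV _ q => q.simple
  | .qand q1 q2 => q1.simple ∧ q2.simple
  | .qunion q1 q2 => q1.simple ∧ q2.simple
  | .proj _ q => q.simple

/-- The LPE consists only of `ε`, `⟨?v,q⟩` and `(·)*`. -/
def LPE.simple : LPE → Prop
  | .eps => True
  | .pat _ => False
  | .seq _ _ => False
  | .alt _ _ => False
  | .star l => l.simple
  | .test _ => False
  | .sub _ q => q.simple
end

/-! ### Property paths under context-based semantics -/

/-- Property path expressions. -/
inductive PP where
  | uri (p : URI)
  | neg (us : List URI)
  | seq (r1 r2 : PP)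
  | alt (r1 r2 : PP)
  | star (r : PP)

/-- Terms allowed in PP-patterns: URIs, literals and variables. -/
inductive PPTerm where
  | uri (u : URI)
  | lit (l : LitId)
  | var (v : Var)

/-- The context selector `C_W`. -/
def CW (W : Web) (a : Obj) : Set RDFTriple :=
  {t | ∃ u d, a = .uri u ∧ W.adoc u = some d ∧ t ∈ W.data d ∧ t.s = .uri u}

/-- The RDF terms occurring in triples of documents of `W`. -/
def termsW (W : Web) : Set Obj :=
  {a | ∃ d ∈ W.docs, ∃ t ∈ W.data d, a = t.s.toObj ∨ a = .uri t.p ∨ a = t.o}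

/-- The binary relation on RDF terms induced by a PP expression under
context-based semantics. -/
def ppRel (W : Web) : PP → Obj → Obj → Prop
  | .uri p, a, b => ∃ s, objToSubj a = some s ∧ (⟨s, p, b⟩ : RDFTriple) ∈ CW W a
  | .neg us, a, b => ∃ p, p ∉ us ∧ ∃ s, objToSubj a = some s ∧ (⟨s, p, b⟩ : RDFTriple) ∈ CW W a
  | .seq r1 r2, a, b => ∃ m, ppRel W r1 a m ∧ ppRel W r2 m b
  | .alt r1 r2, a, b => ppRel W r1 a b ∨ ppRel W r2 a b
  | .star r, a, b => (a = b ∧ a ∈ termsW W) ∨ Relation.TransGen (ppRel W r) a b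

def PPTerm.toPval (μ : Mapping) : PPTerm → Option Obj
  | .uri u => some (.uri u)
  | .lit l => some (.lit l)
  | .var v => μ v

def ppVars (α β : PPTerm) : Set Var := {v | α = .var v ∨ β = .var v}

/-- The context-based evaluation `⟦(α,r,β)⟧_ctxt^W` of a PP-pattern. -/
def ctxtEvalPat (W : Web) (α : PPTerm) (r : PP) (β : PPTerm) : Set Mapping :=
  {μ | mdom μ = ppVars α β ∧
    ∃ a b, α.toPval μ = some a ∧ β.toPval μ = some b ∧ ppRel W r a b}

/-- PP-based SPARQL queries. -/
inductive PPQ where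
  | pat (α : PPTerm) (r : PP) (β : PPTerm)
  | and (R1 R2 : PPQ)
  | union (R1 R2 : PPQ)
  | opt (R1 R2 : PPQ)
  | filter (R : PPQ) (c : Cond)

/-- The context-based evaluation `⟦R⟧_ctxt^W` of a PP-based SPARQL query. -/
def evalPPQ (W : Web) : PPQ → Set Mapping
  | .pat α r β => ctxtEvalPat W α r β
  | .and R1 R2 => mjoin (evalPPQ W R1) (evalPPQ W R2)
  | .union R1 R2 => evalPPQ W R1 ∪ evalPPQ W R2
  | .opt R1 R2 =>
      mjoin (evalPPQ W R1) (evalPPQ W R2) ∪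
        {μ | μ ∈ evalPPQ W R1 ∧ ∀ μ2 ∈ evalPPQ W R2, ¬ compatible μ μ2}
  | .filter R c => {μ | μ ∈ evalPPQ W R ∧ condHolds μ c}

/-! ### NautiLOD -/

/-- NautiLOD expressions (without action rules). -/
inductive NLOD where
  | fwd (p : URI)
  | bwd (p : URI)
  | any
  | seq (n1 n2 : NLOD)
  | alt (n1 n2 : NLOD)
  | star (n : NLOD)
  | ask (n : NLOD) (P : GP)

/-- Dataset used for evaluating an ASK pattern over the data of a single document. -/
def askDS (W : Web) (d : Doc) : RDFDataset :=
  ⟨((W.data d : Finset RDFTriple) : Set RDFTriple), fun _ => none⟩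

/-- NautiLOD semantics `⟦n⟧_W^u`. -/
def nlEval (W : Web) : NLOD → URI → Set URI
  | .fwd p, u => {u' | ∃ d, W.adoc u = some d ∧ (⟨.uri u, p, .uri u'⟩ : RDFTriple) ∈ W.data d}
  | .bwd p, u => {u' | ∃ d, W.adoc u = some d ∧ (⟨.uri u', p, .uri u⟩ : RDFTriple) ∈ W.data d}
  | .any, u => {u' | ∃ d q, W.adoc u = some d ∧ (⟨.uri u, q, .uri u'⟩ : RDFTriple) ∈ W.data d}
  | .seq n1 n2, u =>
      {u'' | ∃ u', u' ∈ nlEval W n1 u ∧ (W.adoc u').isSome ∧ u'' ∈ nlEval W n2 u'}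
  | .alt n1 n2, u => nlEval W n1 u ∪ nlEval W n2 u
  | .star n, u =>
      {u' | Relation.ReflTransGen (fun a b => (W.adoc a).isSome ∧ b ∈ nlEval W n a) u u'}
  | .ask n P, u =>
      {u' | u' ∈ nlEval W n u ∧
        ∃ d, W.adoc u' = some d ∧ evalGP (askDS W d) P ((W.data d : Finset RDFTriple) : Set RDFTriple) ≠ ∅}

/-! ### Variables occurring in patterns and NautiLOD expressions -/

def condHasVar (v : Var) : Cond → Prop
  | .eq a b => a = .var v ∨ b = .var v
  | .neq a b => a = .var v ∨ b = .var v
  | .and c1 c2 => condHasVar v c1 ∨ condHasVar v c2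
  | .or c1 c2 => condHasVar v c1 ∨ condHasVar v c2
  | .not c => condHasVar v c

/-- The variable `v` occurs in the SPARQL graph pattern. -/
def gpHasVar (v : Var) : GP → Prop
  | .empty => False
  | .tp t => t.sj = .var v ∨ t.pr = .var v ∨ t.ob = .var v
  | .and g1 g2 => gpHasVar v g1 ∨ gpHasVar v g2
  | .union g1 g2 => gpHasVar v g1 ∨ gpHasVar v g2
  | .opt g1 g2 => gpHasVar v g1 ∨ gpHasVar v g2
  | .filter g c => gpHasVar v g ∨ condHasVar v c
  | .graphU _ g => gpHasVar v g
  | .graphV w g => v = w ∨ gpHasVar v g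
  | .bind g _ w => v = w ∨ gpHasVar v g

/-- The variable `v` occurs in the NautiLOD expression. -/
def nlodHasVar (v : Var) : NLOD → Prop
  | .fwd _ => False
  | .bwd _ => False
  | .any => False
  | .seq n1 n2 => nlodHasVar v n1 ∨ nlodHasVar v n2
  | .alt n1 n2 => nlodHasVar v n1 ∨ nlodHasVar v n2
  | .star n => nlodHasVar v n
  | .ask n P => nlodHasVar v n ∨ gpHasVar v P

/-! ### Reachability-based query semantics -/

/-- A reachability criterion. -/
def ReachCrit := RDFTriple → URI → GP → Prop

def cAll : ReachCrit := fun _ _ _ => True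

def cNone : ReachCrit := fun _ _ _ => False

/-- The list of triple patterns occurring in a SPARQL graph pattern. -/
def GP.tps : GP → List TriplePattern
  | .empty => []
  | .tp t => [t]
  | .and g1 g2 => g1.tps ++ g2.tps
  | .union g1 g2 => g1.tps ++ g2.tps
  | .opt g1 g2 => g1.tps ++ g2.tps
  | .filter g _ => g.tps
  | .graphU _ g => g.tps
  | .graphV _ g => g.tps
  | .bind g _ _ => g.tps

def cMatch : ReachCrit := fun t _ P => ∃ (μ : Mapping) (tp : TriplePattern),
  tp ∈ P.tps ∧ tpInst μ tp = some t

/-- `(c,S,P)`-reachability of a document in `W`. -/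
inductive Reachable (W : Web) (c : ReachCrit) (S : Set URI) (P : GP) : Doc → Prop where
  | seed (u : URI) (d : Doc) : u ∈ S → W.adoc u = some d → Reachable W c S P d
  | step (dsrc : Doc) (t : RDFTriple) (u : URI) (d : Doc) :
      Reachable W c S P dsrc → W.edge dsrc t u d → c t u P → Reachable W c S P d

/-- The RDF graph consisting of all triples of all `(c,S,P)`-reachable documents. -/
def reachGraph (W : Web) (c : ReachCrit) (S : Set URI) (P : GP) : Set RDFTriple :=
  {t | ∃ d, Reachable W c S P d ∧ t ∈ W.data d}

/-- The S-based evaluation of `P` over `W` under `c`-semantics. -/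
def reachEval (W : Web) (c : ReachCrit) (S : Set URI) (P : GP) : Set Mapping :=
  evalGP ⟨reachGraph W c S P, fun _ => none⟩ P (reachGraph W c S P)

/-! ### Constructions used in Theorems on c_Match and NautiLOD -/

def addFilter (v : Var) (pt : PTerm) (g : GP) : GP :=
  match pt with
  | .var _ => g
  | .term o => .filter g (.eq (.var v) (.term o))

/-- The basic LDQL query `q_k = ⟨ε,P_k⟩` associated with a triple pattern. -/
def matchQ (vs vp vo : Var) (t : TriplePattern) : LDQL :=
  .base .eps (addFilter vo t.ob (addFilter vp t.pr (addFilter vs t.sj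
    (.tp ⟨.var vs, .var vp, .var vo⟩))))

/-- An LPE whose evaluation is empty everywhere. -/
def emptyLPE (v : Var) : LPE := .sub v (.base .eps .empty)

/-- The LPE `l_Match` associated with a SPARQL graph pattern. -/
def lMatch (vs vp vo : Var) (P : GP) : LPE :=
  .star ((P.tps.map (fun t =>
      LPE.alt (.sub vs (matchQ vs vp vo t))
        (LPE.alt (.sub vp (matchQ vs vp vo t)) (.sub vo (matchQ vs vp vo t))))).foldr
    LPE.alt (emptyLPE vs))

/-- The translation `trans_N` from NautiLOD expressions to LPEs, using the
(fresh, pairwise distinct) variables `vx`, `vu`, `vp`. -/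
def transN (vx vu vp : Var) : NLOD → LPE
  | .fwd p => .pat ⟨.plus, .uri p, .star⟩
  | .bwd p => .pat ⟨.star, .uri p, .plus⟩
  | .any => .sub vx (.base .eps (.graphV vu (.tp ⟨.var vu, .var vp, .var vx⟩)))
  | .seq n1 n2 => .seq (transN vx vu vp n1) (transN vx vu vp n2)
  | .alt n1 n2 => .alt (transN vx vu vp n1) (transN vx vu vp n2)
  | .star n => .star (transN vx vu vp n)
  | .ask n P => .seq (transN vx vu vp n) (.test (.sub vx (.base .eps (.graphV vx P))))


/-! ### Auxiliary development for Statement 8 -/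

section Statement8

/-- The set of URIs on which `adoc` is defined. -/
def adom (W : Web) : Set URI := {u | (W.adoc u).isSome}

@[simp] lemma munion_empty_left (μ : Mapping) : munion emptyMap μ = μ := by
  funext v; rfl

lemma compatible_empty_left (μ : Mapping) : compatible emptyMap μ := by
  intro v a b h; exact absurd h (by simp [emptyMap])

@[simp] lemma mjoin_emptyMap_left (Ω : Set Mapping) :
    mjoin {emptyMap} Ω = Ω := by
  ext μ; constructor
  · rintro ⟨μ1, hμ1, μ2, hμ2, _, rfl⟩
    simp only [Set.mem_singleton_iff] at hμ1; subst hμ1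
    simpa using hμ2
  · intro h
    exact ⟨emptyMap, rfl, μ, h, compatible_empty_left μ, by simp⟩

@[simp] lemma single_self (v : Var) (o : Obj) : single v o v = some o := by
  simp [single]

lemma single_other {v w : Var} (o : Obj) (h : w ≠ v) : single v o w = none := by
  simp [single, h]

@[simp] lemma restrictV_empty (μ : Mapping) : restrictV ∅ μ = emptyMap := by
  funext v; simp [restrictV, emptyMap]

lemma evalL_none (W : Web) (l : LPE) (u : URI) (h : W.adoc u = none) :
    evalL W l u = ∅ := by
  match l with
  | .eps => simp [evalL, h]
  | .pat lp => simp [evalL, h]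
  | .seq l1 l2 =>
      rw [evalL]
      ext x; simp only [Set.mem_setOf_eq, Set.mem_empty_iff_false, iff_false]
      rintro ⟨u', hu', _⟩
      rw [evalL_none W l1 u h] at hu'; exact hu'
  | .alt l1 l2 =>
      rw [evalL, evalL_none W l1 u h, evalL_none W l2 u h]; simp
  | .star l' =>
      rw [evalL]; ext x; simp [h]
  | .test l' =>
      rw [evalL, evalL_none W l' u h]; ext x; simp
  | .sub v q =>
      rw [evalL]; ext x; simp [h]

lemma evalL_nonempty_dom {W : Web} {l : LPE} {u : URI}
    (h : evalL W l u ≠ ∅) : (W.adoc u).isSome := by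
  by_contra hc
  exact h (evalL_none W l u (by cases hh : W.adoc u with
    | none => rfl
    | some d => rw [hh] at hc; simp at hc))

/-- A graph pattern with no solutions. -/
def GPfalse : GP := .filter .empty (.neq (.term (.uri 0)) (.term (.uri 0)))

@[simp] lemma evalGP_GPfalse (D : RDFDataset) (G : Set RDFTriple) :
    evalGP D GPfalse G = ∅ := by
  ext μ; simp [GPfalse, evalGP, condHolds, pval]

/-- An LDQL query with no solutions. -/
def Qempty : LDQL := .base .eps GPfalse

@[simp] lemma evalQ_Qempty (W : Web) (S : Set URI) : evalQ W Qempty S = ∅ := by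
  rw [Qempty, evalQ]; exact evalGP_GPfalse _ _

/-- An LDQL query whose unique solution is the empty mapping. -/
def qT : LDQL := .base .eps .empty

@[simp] lemma evalQ_qT (W : Web) (S : Set URI) : evalQ W qT S = {emptyMap} := by
  rw [qT, evalQ]; rfl

lemma datasetW_inter_adom (W : Web) (U0 : Set URI) :
    datasetW W (U0 ∩ adom W) = datasetW W U0 := by
  unfold datasetW
  congr 1
  · ext t
    simp only [Set.mem_setOf_eq, Set.mem_inter_iff]
    constructor
    · rintro ⟨u, ⟨hu, _⟩, hd⟩; exact ⟨u, hu, hd⟩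
    · rintro ⟨u, hu, d, hd, ht⟩
      exact ⟨u, ⟨hu, by simp [adom, hd]⟩, d, hd, ht⟩
  · funext u
    by_cases hU : u ∈ U0
    · by_cases hA : (W.adoc u).isSome
      · have : u ∈ U0 ∩ adom W := ⟨hU, hA⟩
        simp [this, hU]
      · have h0 : W.adoc u = none := Option.not_isSome_iff_eq_none.mp hA
        have : u ∉ U0 ∩ adom W := by
          rintro ⟨_, h⟩; exact hA h
        simp [this, hU, h0]
    · have : u ∉ U0 ∩ adom W := by rintro ⟨h, _⟩; exact hU h
      simp [this, hU]

lemma evalGP_graphV_empty (W : Web) (U0 : Set URI) (v : Var) (G : Set RDFTriple) :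
    evalGP (datasetW W U0) (.graphV v .empty) G
      = {m | ∃ x ∈ U0 ∩ adom W, m = single v (.uri x)} := by
  ext μ
  simp only [evalGP, Set.mem_setOf_eq]
  constructor
  · rintro ⟨u, G', hn, μ', hμ', _, rfl⟩
    simp only [Set.mem_singleton_iff] at hμ'; subst hμ'
    rw [munion_empty_left]
    simp only [datasetW] at hn
    by_cases hU : u ∈ U0
    · rw [if_pos hU] at hn
      refine ⟨u, ⟨hU, ?_⟩, rfl⟩
      cases h : W.adoc u with
      | none => rw [h] at hn; simp at hn
      | some d => simp [adom, h]
    · rw [if_neg hU] at hn; exact absurd hn (by simp)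
  · rintro ⟨x, ⟨hx, hxa⟩, rfl⟩
    obtain ⟨d, hd⟩ := Option.isSome_iff_exists.mp hxa
    refine ⟨x, ((W.data d : Finset RDFTriple) : Set RDFTriple), ?_, emptyMap, rfl,
      compatible_empty_left _, (munion_empty_left _).symm⟩
    simp [datasetW, hx, hd]

/-- Wrapping an LPE so that its result set is intersected with `adom W`. -/
def wrapL (l : LPE) : LPE := .sub 0 (.base l (.graphV 0 .empty))

lemma evalQ_base_singleton (W : Web) (l : LPE) (P : GP) (u : URI) :
    evalQ W (.base l P) {u}
      = evalGP (datasetW W (evalL W l u)) P (datasetW W (evalL W l u)).dflt := by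
  rw [evalQ]
  have : {u' | ∃ a ∈ ({u} : Set URI), u' ∈ evalL W l a} = evalL W l u := by
    ext x; simp
  rw [this]

lemma wrapL_sem (W : Web) (l : LPE) (u : URI) :
    evalL W (wrapL l) u = evalL W l u ∩ adom W := by
  rw [wrapL, evalL]
  by_cases h : (W.adoc u).isSome
  · ext u'
    simp only [Set.mem_setOf_eq, evalQ_base_singleton, evalGP_graphV_empty,
      Set.mem_inter_iff]
    constructor
    · rintro ⟨_, μ, ⟨x, hx, rfl⟩, hv⟩
      rw [single_self] at hv
      obtain rfl : x = u' := by
        injection hv with hv; cases hv; rfl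
      exact hx
    · rintro ⟨h1, h2⟩
      exact ⟨h, single 0 (.uri u'), ⟨u', ⟨h1, h2⟩, rfl⟩, by simp⟩
  · have h0 : W.adoc u = none := Option.not_isSome_iff_eq_none.mp h
    rw [evalL_none W l u h0]
    ext u'; simp [h]

lemma wrapL_simple {l : LPE} (h : l.simple) : (wrapL l).simple := by
  simpa [wrapL, LPE.simple, LDQL.simple] using h

lemma munion_ne_none_iff (μ1 μ2 : Mapping) (v : Var) :
    munion μ1 μ2 v ≠ none ↔ (μ1 v ≠ none ∨ μ2 v ≠ none) := by
  unfold munion; cases μ1 v <;> simp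

lemma munion_apply_left_none {μ1 : Mapping} {v : Var} (h : μ1 v = none)
    (μ2 : Mapping) : munion μ1 μ2 v = μ2 v := by
  unfold munion; rw [h]

lemma munion_apply_left_some {μ1 : Mapping} {v : Var} {o : Obj}
    (h : μ1 v = some o) (μ2 : Mapping) : munion μ1 μ2 v = some o := by
  unfold munion; rw [h]

/-- Restricting a query to the solutions in which `v0` is bound. -/
def Bnd (v0 : Var) : LDQL → LDQL
  | .base l P => .base l (.filter P (.eq (.var v0) (.var v0)))
  | .seedU U0 q => .seedU U0 (Bnd v0 q)
  | .seedV w q => if w = v0 then .seedV w q else .seedV w (Bnd v0 q)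
  | .qand q1 q2 => .qunion (.qand (Bnd v0 q1) q2) (.qand q1 (Bnd v0 q2))
  | .qunion q1 q2 => .qunion (Bnd v0 q1) (Bnd v0 q2)
  | .proj V0 q => if v0 ∈ V0 then .proj V0 (Bnd v0 q) else Qempty

theorem Bnd_spec (v0 : Var) (q : LDQL) (W : Web) (S : Set URI) :
    evalQ W (Bnd v0 q) S = {μ ∈ evalQ W q S | μ v0 ≠ none} := by
  match q with
  | .base l P =>
      rw [Bnd, evalQ, evalQ]
      ext μ
      simp only [evalGP, Set.mem_setOf_eq, condHolds, pval,
        Option.ne_none_iff_exists']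
      constructor
      · rintro ⟨h1, x, hx, -⟩; exact ⟨h1, x, hx⟩
      · rintro ⟨h1, x, hx⟩; exact ⟨h1, x, hx, hx⟩
  | .seedU U0 q' =>
      rw [Bnd, evalQ, evalQ, Bnd_spec v0 q']
  | .seedV w q' =>
      by_cases h : w = v0
      · subst h
        rw [Bnd, if_pos rfl]
        ext μ
        simp only [Set.mem_setOf_eq]
        refine (and_iff_left_of_imp ?_).symm
        intro hμ
        rw [evalQ] at hμ
        simp only [Set.mem_iUnion] at hμ
        obtain ⟨u, μ1, _, μ2, hμ2, _, rfl⟩ := hμ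
        simp only [Set.mem_singleton_iff] at hμ2; subst hμ2
        rw [munion_ne_none_iff]
        right; simp
      · rw [Bnd, if_neg h, evalQ, evalQ]
        ext μ
        simp only [Set.mem_iUnion, Set.mem_setOf_eq]
        have key : ∀ (u : URI) (μ1 : Mapping),
            munion μ1 (single w (.uri u)) v0 = μ1 v0 := by
          intro u μ1
          cases h1 : μ1 v0 with
          | some a => exact munion_apply_left_some h1 _
          | none =>
              rw [munion_apply_left_none h1, single_other _ (fun hc => h hc.symm)]
        constructor
        · rintro ⟨u, μ1, hμ1, μ2, hμ2, hc, rfl⟩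
          rw [Bnd_spec v0 q'] at hμ1
          simp only [Set.mem_singleton_iff] at hμ2; subst hμ2
          refine ⟨⟨u, μ1, hμ1.1, _, rfl, hc, rfl⟩, ?_⟩
          rw [key]; exact hμ1.2
        · rintro ⟨⟨u, μ1, hμ1, μ2, hμ2, hc, rfl⟩, hne⟩
          simp only [Set.mem_singleton_iff] at hμ2; subst hμ2
          rw [key] at hne
          refine ⟨u, μ1, ?_, _, rfl, hc, rfl⟩
          rw [Bnd_spec v0 q']; exact ⟨hμ1, hne⟩
  | .qand q1 q2 =>
      rw [Bnd, evalQ, evalQ, evalQ, evalQ, Bnd_spec v0 q1, Bnd_spec v0 q2]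
      ext μ
      simp only [Set.mem_union, Set.mem_setOf_eq]
      constructor
      · rintro (⟨μ1, ⟨h1, hb⟩, μ2, h2, hc, rfl⟩ | ⟨μ1, h1, μ2, ⟨h2, hb⟩, hc, rfl⟩) <;>
          exact ⟨⟨μ1, h1, μ2, h2, hc, rfl⟩,
            (munion_ne_none_iff μ1 μ2 v0).mpr (by first | exact Or.inl hb | exact Or.inr hb)⟩
      · rintro ⟨⟨μ1, h1, μ2, h2, hc, rfl⟩, hne⟩
        rcases (munion_ne_none_iff μ1 μ2 v0).mp hne with hb | hb
        · exact Or.inl ⟨μ1, ⟨h1, hb⟩, μ2, h2, hc, rfl⟩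
        · exact Or.inr ⟨μ1, h1, μ2, ⟨h2, hb⟩, hc, rfl⟩
  | .qunion q1 q2 =>
      rw [Bnd, evalQ, evalQ, Bnd_spec v0 q1, Bnd_spec v0 q2]
      ext μ
      simp only [Set.mem_union, Set.mem_setOf_eq]
      tauto
  | .proj V0 q' =>
      by_cases h : v0 ∈ V0
      · rw [Bnd, if_pos h, evalQ, evalQ, Bnd_spec v0 q']
        ext μ
        simp only [Set.mem_image, Set.mem_setOf_eq]
        have key : ∀ μ' : Mapping, restrictV V0 μ' v0 = μ' v0 := by
          intro μ'; simp [restrictV, h]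
        constructor
        · rintro ⟨μ', ⟨h1, hb⟩, rfl⟩
          exact ⟨⟨μ', h1, rfl⟩, by rw [key]; exact hb⟩
        · rintro ⟨⟨μ', h1, rfl⟩, hne⟩
          rw [key] at hne
          exact ⟨μ', ⟨h1, hne⟩, rfl⟩
      · rw [Bnd, if_neg h, evalQ_Qempty, evalQ]
        ext μ
        simp only [Set.mem_empty_iff_false, false_iff, Set.mem_setOf_eq, Set.mem_image]
        rintro ⟨⟨μ', _, rfl⟩, hne⟩
        exact hne (by simp [restrictV, h])

theorem Bnd_simple (v0 : Var) (q : LDQL) (h : q.simple) : (Bnd v0 q).simple := by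
  match q with
  | .base l P => rw [Bnd]; exact h
  | .seedU U0 q' => rw [Bnd]; exact Bnd_simple v0 q' h
  | .seedV w q' =>
      rw [Bnd]
      by_cases hw : w = v0
      · rw [if_pos hw]; exact h
      · rw [if_neg hw]; exact Bnd_simple v0 q' h
  | .qand q1 q2 =>
      rw [Bnd]
      exact ⟨⟨Bnd_simple v0 q1 h.1, h.2⟩, ⟨h.1, Bnd_simple v0 q2 h.2⟩⟩
  | .qunion q1 q2 =>
      rw [Bnd]
      exact ⟨Bnd_simple v0 q1 h.1, Bnd_simple v0 q2 h.2⟩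
  | .proj V0 q' =>
      rw [Bnd]
      by_cases hv : v0 ∈ V0
      · rw [if_pos hv]; exact Bnd_simple v0 q' h
      · rw [if_neg hv]; trivial

lemma objToSubj_eq_some {o : Obj} {s : Subj} : objToSubj o = some s ↔ o = s.toObj := by
  cases o <;> cases s <;> simp [objToSubj, Subj.toObj]

lemma objToURI_eq_some {o : Obj} {p : URI} : objToURI o = some p ↔ o = .uri p := by
  cases o <;> simp [objToURI]

@[simp] lemma objToSubj_toObj (s : Subj) : objToSubj s.toObj = some s := by
  cases s <;> rfl

/-- The canonical solution of the triple pattern `(?b1,?b2,?b3)` for a triple. -/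
def tpMap (t : RDFTriple) (b1 b2 b3 : Var) : Mapping := fun x =>
  if x = b1 then some t.s.toObj else if x = b2 then some (.uri t.p)
  else if x = b3 then some t.o else none

lemma tpInst_var_eq (μ : Mapping) (b1 b2 b3 : Var) (tr : RDFTriple) :
    tpInst μ ⟨.var b1, .var b2, .var b3⟩ = some tr ↔
      μ b1 = some tr.s.toObj ∧ μ b2 = some (.uri tr.p) ∧ μ b3 = some tr.o := by
  constructor
  · intro h
    simp only [tpInst, pval, Option.bind_eq_bind, Option.bind_eq_some_iff,
      Option.pure_def, Option.some.injEq] at h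
    obtain ⟨s0, h1, s', hs, p0, h2, p', hp, o0, h3, htr⟩ := h
    rw [objToSubj_eq_some] at hs
    rw [objToURI_eq_some] at hp
    subst htr; subst hs; subst hp
    exact ⟨h1, h2, h3⟩
  · rintro ⟨h1, h2, h3⟩
    simp [tpInst, pval, h1, h2, h3, objToURI]

lemma evalGP_tp_vars (D : RDFDataset) (G : Set RDFTriple) (b1 b2 b3 : Var)
    (h21 : b2 ≠ b1) (h31 : b3 ≠ b1) (h32 : b3 ≠ b2) :
    evalGP D (.tp ⟨.var b1, .var b2, .var b3⟩) G
      = {μ | ∃ t ∈ G, μ = tpMap t b1 b2 b3} := by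
  ext μ
  simp only [evalGP, Set.mem_setOf_eq]
  constructor
  · rintro ⟨hdom, tr, htr, hinst⟩
    rw [tpInst_var_eq] at hinst
    obtain ⟨h1, h2, h3⟩ := hinst
    refine ⟨tr, htr, ?_⟩
    funext x
    unfold tpMap
    by_cases e1 : x = b1
    · rw [if_pos e1, e1]; exact h1
    · rw [if_neg e1]
      by_cases e2 : x = b2
      · rw [if_pos e2, e2]; exact h2
      · rw [if_neg e2]
        by_cases e3 : x = b3
        · rw [if_pos e3, e3]; exact h3
        · rw [if_neg e3]
          have hx : x ∉ mdom μ := by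
            rw [hdom]
            simp [TriplePattern.varsOf, PTerm.varsOf, e1, e2, e3]
          simpa [mdom] using hx
  · rintro ⟨t, ht, rfl⟩
    refine ⟨?_, t, ht, ?_⟩
    · ext x
      simp only [mdom, Set.mem_setOf_eq, TriplePattern.varsOf, PTerm.varsOf,
        Set.mem_union, Set.mem_singleton_iff]
      unfold tpMap
      by_cases e1 : x = b1 <;> by_cases e2 : x = b2 <;> by_cases e3 : x = b3 <;>
        simp [e1, e2, e3, h21, h31, h32]
    · rw [tpInst_var_eq]
      refine ⟨?_, ?_, ?_⟩ <;> simp [tpMap, h21, h31, h32]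

lemma evalGP_filter (D : RDFDataset) (g : GP) (c : Cond) (G : Set RDFTriple) :
    evalGP D (.filter g c) G = {μ | μ ∈ evalGP D g G ∧ condHolds μ c} := by
  simp only [evalGP]

lemma evalGP_and (D : RDFDataset) (g1 g2 : GP) (G : Set RDFTriple) :
    evalGP D (.and g1 g2) G = mjoin (evalGP D g1 G) (evalGP D g2 G) := by
  simp only [evalGP]

lemma evalGP_union (D : RDFDataset) (g1 g2 : GP) (G : Set RDFTriple) :
    evalGP D (.union g1 g2) G = evalGP D g1 G ∪ evalGP D g2 G := by
  simp only [evalGP]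

lemma toObj_eq_uri (s : Subj) (w : URI) : s.toObj = .uri w ↔ s = .uri w := by
  cases s <;> simp [Subj.toObj]

lemma uri_eq_toObj (s : Subj) (w : URI) : (Obj.uri w = s.toObj) ↔ s = .uri w := by
  cases s <;> simp [Subj.toObj, eq_comm]

/-- Conditions translating the subject/predicate components of a link pattern. -/
def condU (c : LPUP) (b : Var) : Cond :=
  match c with
  | .uri w => .eq (.var b) (.term (.uri w))
  | .star => .eq (.term (.uri 0)) (.term (.uri 0))
  | .plus => .eq (.var b) (.var 4)

/-- Conditions translating the object component of a link pattern. -/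
def condO (c : LPULP) (b : Var) : Cond :=
  match c with
  | .uri w => .eq (.var b) (.term (.uri w))
  | .lit l => .eq (.var b) (.term (.lit l))
  | .star => .eq (.term (.uri 0)) (.term (.uri 0))
  | .plus => .eq (.var b) (.var 4)

/-- One branch of the graph pattern associated with a link pattern. -/
def mkBranch (lp : LinkPattern) (b1 b2 b3 : Var) : GP :=
  .filter (.filter (.filter
    (.and (.graphV 4 .empty) (.tp ⟨.var b1, .var b2, .var b3⟩))
    (condU lp.c1 b1)) (condU lp.c2 b2)) (condO lp.c3 b3)

/-- The canonical solution of a branch. -/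
def tMap (u : URI) (t : RDFTriple) (b1 b2 b3 : Var) : Mapping :=
  munion (single 4 (.uri u)) (tpMap t b1 b2 b3)

lemma tpMap_at4 {b1 b2 b3 : Var} (h14 : b1 ≠ 4) (h24 : b2 ≠ 4) (h34 : b3 ≠ 4)
    (t : RDFTriple) : tpMap t b1 b2 b3 4 = none := by
  unfold tpMap
  rw [if_neg (fun h => h14 h.symm), if_neg (fun h => h24 h.symm),
    if_neg (fun h => h34 h.symm)]

lemma tMap_at4 (u : URI) (t : RDFTriple) (b1 b2 b3 : Var) :
    tMap u t b1 b2 b3 4 = some (.uri u) :=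
  munion_apply_left_some (single_self _ _) _

lemma tMap_b1 {b1 : Var} (h14 : b1 ≠ 4) (u : URI) (t : RDFTriple) (b2 b3 : Var) :
    tMap u t b1 b2 b3 b1 = some t.s.toObj := by
  rw [tMap, munion_apply_left_none (single_other _ h14)]
  simp [tpMap]

lemma tMap_b2 {b1 b2 : Var} (h24 : b2 ≠ 4) (h21 : b2 ≠ b1) (u : URI)
    (t : RDFTriple) (b3 : Var) :
    tMap u t b1 b2 b3 b2 = some (.uri t.p) := by
  rw [tMap, munion_apply_left_none (single_other _ h24)]
  simp [tpMap, h21]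

lemma tMap_b3 {b1 b2 b3 : Var} (h34 : b3 ≠ 4) (h31 : b3 ≠ b1) (h32 : b3 ≠ b2)
    (u : URI) (t : RDFTriple) :
    tMap u t b1 b2 b3 b3 = some t.o := by
  rw [tMap, munion_apply_left_none (single_other _ h34)]
  simp [tpMap, h31, h32]

lemma condU_subj_iff {b1 : Var} (h14 : b1 ≠ 4) (c : LPUP) (u : URI)
    (t : RDFTriple) (b2 b3 : Var) :
    condHolds (tMap u t b1 b2 b3) (condU c b1) ↔ matchSubj c u t.s := by
  cases c with
  | uri w =>
      simp [condU, condHolds, pval, matchSubj, tMap_b1 h14, toObj_eq_uri,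
        uri_eq_toObj, eq_comm]
  | star => simp [condU, condHolds, pval, matchSubj]
  | plus =>
      simp [condU, condHolds, pval, matchSubj, tMap_b1 h14, tMap_at4,
        toObj_eq_uri, uri_eq_toObj, eq_comm]

lemma condU_pred_iff {b1 b2 : Var} (h24 : b2 ≠ 4) (h21 : b2 ≠ b1) (c : LPUP)
    (u : URI) (t : RDFTriple) (b3 : Var) :
    condHolds (tMap u t b1 b2 b3) (condU c b2) ↔ matchPred c u t.p := by
  cases c with
  | uri w =>
      simp [condU, condHolds, pval, matchPred, tMap_b2 h24 h21, eq_comm]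
  | star => simp [condU, condHolds, pval, matchPred]
  | plus =>
      simp [condU, condHolds, pval, matchPred, tMap_b2 h24 h21, tMap_at4, eq_comm]

lemma condO_obj_iff {b1 b2 b3 : Var} (h34 : b3 ≠ 4) (h31 : b3 ≠ b1)
    (h32 : b3 ≠ b2) (c : LPULP) (u : URI) (t : RDFTriple) :
    condHolds (tMap u t b1 b2 b3) (condO c b3) ↔ matchObj c u t.o := by
  cases c with
  | uri w =>
      simp [condO, condHolds, pval, matchObj, tMap_b3 h34 h31 h32, eq_comm]
  | lit l =>
      simp [condO, condHolds, pval, matchObj, tMap_b3 h34 h31 h32, eq_comm]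
  | star => simp [condO, condHolds, pval, matchObj]
  | plus =>
      simp [condO, condHolds, pval, matchObj, tMap_b3 h34 h31 h32, tMap_at4, eq_comm]

lemma dflt_singleton {W : Web} {u : URI} {d : Doc} (hd : W.adoc u = some d) :
    (datasetW W {u}).dflt = ((W.data d : Finset RDFTriple) : Set RDFTriple) := by
  ext t; simp [datasetW, hd]

lemma mkBranch_sem (W : Web) (lp : LinkPattern) {u : URI} {d : Doc}
    (hd : W.adoc u = some d) (b1 b2 b3 : Var)
    (h14 : b1 ≠ 4) (h24 : b2 ≠ 4) (h34 : b3 ≠ 4)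
    (h21 : b2 ≠ b1) (h31 : b3 ≠ b1) (h32 : b3 ≠ b2) :
    evalGP (datasetW W {u}) (mkBranch lp b1 b2 b3) (datasetW W {u}).dflt
      = {μ | ∃ t ∈ W.data d, μ = tMap u t b1 b2 b3 ∧
          matchSubj lp.c1 u t.s ∧ matchPred lp.c2 u t.p ∧ matchObj lp.c3 u t.o} := by
  rw [mkBranch, evalGP_filter, evalGP_filter, evalGP_filter, evalGP_and,
    evalGP_graphV_empty, evalGP_tp_vars _ _ b1 b2 b3 h21 h31 h32, dflt_singleton hd]
  ext μ
  simp only [Set.mem_setOf_eq]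
  constructor
  · rintro ⟨⟨⟨hm, hc1⟩, hc2⟩, hc3⟩
    obtain ⟨μ1, hμ1, μ2, hμ2, hcomp, rfl⟩ := hm
    simp only [Set.mem_setOf_eq] at hμ1 hμ2
    obtain ⟨x, hx, rfl⟩ := hμ1
    have hxu : x = u := by simpa using Set.mem_of_mem_inter_left hx
    obtain ⟨t, ht, rfl⟩ := hμ2
    rw [hxu] at hc1 hc2 hc3 ⊢
    have hμeq : munion (single 4 (.uri u)) (tpMap t b1 b2 b3) = tMap u t b1 b2 b3 := rfl
    rw [hμeq] at hc1 hc2 hc3 ⊢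
    exact ⟨t, Finset.mem_coe.mp ht, rfl, (condU_subj_iff h14 _ _ _ _ _).mp hc1,
      (condU_pred_iff h24 h21 _ _ _ _).mp hc2, (condO_obj_iff h34 h31 h32 _ _ _).mp hc3⟩
  · rintro ⟨t, ht, rfl, m1, m2, m3⟩
    have hcomp : compatible (single 4 (.uri u)) (tpMap t b1 b2 b3) := by
      intro v a b hsa hsb
      by_cases hv : v = 4
      · subst hv; rw [tpMap_at4 h14 h24 h34] at hsb; exact absurd hsb (by simp)
      · rw [single_other _ hv] at hsa; exact absurd hsa (by simp)
    refine ⟨⟨⟨⟨single 4 (.uri u), ?_, tpMap t b1 b2 b3, ⟨t, by simpa using ht, rfl⟩,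
        hcomp, rfl⟩, ?_⟩, ?_⟩, ?_⟩
    · exact ⟨u, ⟨rfl, by simp [adom, hd]⟩, rfl⟩
    · exact (condU_subj_iff h14 _ _ _ _ _).mpr m1
    · exact (condU_pred_iff h24 h21 _ _ _ _).mpr m2
    · exact (condO_obj_iff h34 h31 h32 _ _ _).mpr m3

/-- The graph pattern associated with a link pattern. -/
def Glp (lp : LinkPattern) : GP :=
  .union (if lp.c1 = LPUP.star then mkBranch lp 0 2 3 else GPfalse)
    (.union (if lp.c2 = LPUP.star then mkBranch lp 1 0 3 else GPfalse)
      (if lp.c3 = LPULP.star then mkBranch lp 1 2 0 else GPfalse))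

lemma Glp_sem (W : Web) (lp : LinkPattern) {u : URI} {d : Doc}
    (h : W.adoc u = some d) (u' : URI) :
    (∃ μ ∈ evalGP (datasetW W {u}) (Glp lp) (datasetW W {u}).dflt,
        μ 0 = some (.uri u'))
      ↔ ∃ t ∈ W.data d,
          ((lp.c1 = .star ∧ t.s = .uri u') ∨ (lp.c2 = .star ∧ t.p = u') ∨
            (lp.c3 = .star ∧ t.o = .uri u'))
          ∧ matchSubj lp.c1 u t.s ∧ matchPred lp.c2 u t.p ∧ matchObj lp.c3 u t.o := by
  rw [Glp, evalGP_union, evalGP_union]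
  constructor
  · rintro ⟨μ, hμ, h0⟩
    simp only [Set.mem_union] at hμ
    rcases hμ with h1 | h2 | h3
    · by_cases hc : lp.c1 = LPUP.star
      · rw [if_pos hc,
          mkBranch_sem W lp h 0 2 3 (by decide) (by decide) (by decide)
            (by decide) (by decide) (by decide)] at h1
        obtain ⟨t, ht, rfl, m1, m2, m3⟩ := h1
        rw [tMap_b1 (by decide)] at h0
        have hs : t.s = .uri u' := by
          have := Option.some.inj h0; rwa [toObj_eq_uri] at this
        exact ⟨t, ht, Or.inl ⟨hc, hs⟩, m1, m2, m3⟩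
      · rw [if_neg hc, evalGP_GPfalse] at h1
        exact absurd h1 (Set.notMem_empty μ)
    · by_cases hc : lp.c2 = LPUP.star
      · rw [if_pos hc,
          mkBranch_sem W lp h 1 0 3 (by decide) (by decide) (by decide)
            (by decide) (by decide) (by decide)] at h2
        obtain ⟨t, ht, rfl, m1, m2, m3⟩ := h2
        rw [tMap_b2 (by decide) (by decide)] at h0
        have hs : t.p = u' := by
          have := Option.some.inj h0; exact (Obj.uri.inj this)
        exact ⟨t, ht, Or.inr (Or.inl ⟨hc, hs⟩), m1, m2, m3⟩
      · rw [if_neg hc, evalGP_GPfalse] at h2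
        exact absurd h2 (Set.notMem_empty μ)
    · by_cases hc : lp.c3 = LPULP.star
      · rw [if_pos hc,
          mkBranch_sem W lp h 1 2 0 (by decide) (by decide) (by decide)
            (by decide) (by decide) (by decide)] at h3
        obtain ⟨t, ht, rfl, m1, m2, m3⟩ := h3
        rw [tMap_b3 (by decide) (by decide) (by decide)] at h0
        have hs : t.o = .uri u' := Option.some.inj h0
        exact ⟨t, ht, Or.inr (Or.inr ⟨hc, hs⟩), m1, m2, m3⟩
      · rw [if_neg hc, evalGP_GPfalse] at h3
        exact absurd h3 (Set.notMem_empty μ)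
  · rintro ⟨t, ht, hdis, m1, m2, m3⟩
    rcases hdis with ⟨hc, hs⟩ | ⟨hc, hs⟩ | ⟨hc, hs⟩
    · refine ⟨tMap u t 0 2 3, ?_, ?_⟩
      · simp only [Set.mem_union]
        left
        rw [if_pos hc,
          mkBranch_sem W lp h 0 2 3 (by decide) (by decide) (by decide)
            (by decide) (by decide) (by decide)]
        exact ⟨t, ht, rfl, m1, m2, m3⟩
      · rw [tMap_b1 (by decide), hs]; rfl
    · refine ⟨tMap u t 1 0 3, ?_, ?_⟩
      · simp only [Set.mem_union]
        right; left
        rw [if_pos hc,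
          mkBranch_sem W lp h 1 0 3 (by decide) (by decide) (by decide)
            (by decide) (by decide) (by decide)]
        exact ⟨t, ht, rfl, m1, m2, m3⟩
      · rw [tMap_b2 (by decide) (by decide), hs]
    · refine ⟨tMap u t 1 2 0, ?_, ?_⟩
      · simp only [Set.mem_union]
        right; right
        rw [if_pos hc,
          mkBranch_sem W lp h 1 2 0 (by decide) (by decide) (by decide)
            (by decide) (by decide) (by decide)]
        exact ⟨t, ht, rfl, m1, m2, m3⟩
      · rw [tMap_b3 (by decide) (by decide) (by decide), hs]

lemma pat_translation (W : Web) (lp : LinkPattern) (u : URI) :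
    evalL W (wrapL (.sub 0 (.base .eps (Glp lp)))) u
      = evalL W (.pat lp) u ∩ adom W := by
  rw [wrapL_sem]
  cases h : W.adoc u with
  | none => rw [evalL_none W _ u h, evalL_none W _ u h]
  | some d =>
      have heps : evalL W .eps u = {u} := by rw [evalL]; simp [h]
      have hsub : evalL W (.sub 0 (.base .eps (Glp lp))) u
          = {u' | ∃ μ ∈ evalGP (datasetW W {u}) (Glp lp)
              (datasetW W {u}).dflt, μ 0 = some (.uri u')} := by
        rw [evalL, evalQ_base_singleton, heps]
        ext x; simp [h]
      ext u'
      simp only [Set.mem_inter_iff]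
      constructor
      · rintro ⟨hu', hdom⟩
        rw [hsub] at hu'
        obtain ⟨t, ht, hdis, m1, m2, m3⟩ := (Glp_sem W lp h u').mp hu'
        refine ⟨?_, hdom⟩
        obtain ⟨d', hd'⟩ := Option.isSome_iff_exists.mp hdom
        rw [evalL]
        refine ⟨d, h, t, d', ⟨W.adoc_mem u d h, ht, ?_, hd'⟩, ⟨?_, m1, m2, m3⟩⟩
        · rcases hdis with ⟨_, hs⟩ | ⟨_, hs⟩ | ⟨_, hs⟩
          · exact Or.inl hs
          · exact Or.inr (Or.inl hs)
          · exact Or.inr (Or.inr hs)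
        · exact hdis
      · rintro ⟨hu', hdom⟩
        rw [evalL] at hu'
        obtain ⟨d0, hd0, t, d', hedge, hmatch⟩ := hu'
        have hdd : d0 = d := by rw [h] at hd0; exact (Option.some.inj hd0).symm
        subst hdd
        refine ⟨?_, hdom⟩
        rw [hsub]
        exact (Glp_sem W lp h u').mpr ⟨t, hedge.2.1, hmatch.1, hmatch.2⟩

lemma munion_empty_right (μ : Mapping) : munion μ emptyMap = μ := by
  funext v; unfold munion; cases μ v <;> rfl

lemma compatible_empty_right (μ : Mapping) : compatible μ emptyMap := by
  intro v a b _ h; exact absurd h (by simp [emptyMap])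

lemma mjoin_emptyMap_right (Ω : Set Mapping) : mjoin Ω {emptyMap} = Ω := by
  ext μ; constructor
  · rintro ⟨μ1, hμ1, μ2, hμ2, _, rfl⟩
    simp only [Set.mem_singleton_iff] at hμ2; subst hμ2
    rwa [munion_empty_right]
  · intro h
    exact ⟨μ, h, emptyMap, rfl, compatible_empty_right μ, (munion_empty_right μ).symm⟩

lemma mjoin_empty_right (Ω : Set Mapping) : mjoin Ω ∅ = ∅ := by
  ext μ; simp [mjoin]

lemma mjoin_empty_left (Ω : Set Mapping) : mjoin ∅ Ω = ∅ := by
  ext μ; simp [mjoin]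

lemma compatible_self (μ : Mapping) : compatible μ μ := by
  intro v a b ha hb; rw [ha] at hb; exact Option.some.inj hb

lemma munion_self (μ : Mapping) : munion μ μ = μ := by
  funext v; unfold munion; cases μ v <;> rfl

lemma single_eq_some {v w : Var} {o x : Obj} :
    single v o w = some x ↔ (w = v ∧ x = o) := by
  unfold single
  by_cases h : w = v <;> simp [h, eq_comm]

lemma compatible_single_munion {v0 v1 : Var} {a b : Obj} (h : v1 ≠ v0) :
    compatible (single v1 a) (munion (single v0 b) (single v1 a)) := by
  intro w x y hx hy
  rw [single_eq_some] at hx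
  obtain ⟨rfl, rfl⟩ := hx
  rw [munion_apply_left_none (single_other _ h), single_self] at hy
  exact Option.some.inj hy

lemma proj_empty_eval (W : Web) (Q : LDQL) (S : Set URI) :
    evalQ W (.proj ∅ Q) S = if evalQ W Q S = ∅ then ∅ else {emptyMap} := by
  rw [evalQ]
  by_cases h : evalQ W Q S = ∅
  · rw [if_pos h, h]; simp
  · rw [if_neg h]
    obtain ⟨μ0, hμ0⟩ := Set.nonempty_iff_ne_empty.mpr h
    ext μ
    simp only [Set.mem_image, Set.mem_singleton_iff]
    constructor
    · rintro ⟨m, _, rfl⟩; exact restrictV_empty m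
    · rintro rfl; exact ⟨μ0, hμ0, restrictV_empty μ0⟩

lemma evalQ_baseGraphV (W : Web) (l : LPE) (v : Var) (u : URI) :
    evalQ W (.base l (.graphV v .empty)) {u}
      = {m | ∃ x ∈ evalL W l u ∩ adom W, m = single v (.uri x)} := by
  rw [evalQ_base_singleton, evalGP_graphV_empty]

lemma baseGraphV_empty_iff (W : Web) (l : LPE) (v : Var) (u : URI) :
    evalQ W (.base l (.graphV v .empty)) {u} = ∅ ↔ evalL W l u ∩ adom W = ∅ := by
  rw [evalQ_baseGraphV]
  constructor
  · intro h
    rw [Set.eq_empty_iff_forall_notMem] at h ⊢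
    intro x hx
    exact h (single v (.uri x)) ⟨x, hx, rfl⟩
  · intro h
    rw [Set.eq_empty_iff_forall_notMem]
    rintro m ⟨x, hx, rfl⟩
    rw [Set.eq_empty_iff_forall_notMem] at h
    exact h x hx

lemma evalL_pat_subset (W : Web) (lp : LinkPattern) (u : URI) :
    evalL W (.pat lp) u ⊆ adom W := by
  intro x hx
  rw [evalL] at hx
  obtain ⟨d, _, t, d', hedge, _⟩ := hx
  exact Option.isSome_iff_exists.mpr ⟨d', hedge.2.2.2⟩

mutual
/-- Translation of queries into queries whose LPEs are simple. -/
def tq : LDQL → LDQL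
  | .base l P => .base (tl l) P
  | .seedU U0 q => .seedU U0 (tq q)
  | .seedV v q => .seedV v (tq q)
  | .qand q1 q2 => .qand (tq q1) (tq q2)
  | .qunion q1 q2 => .qunion (tq q1) (tq q2)
  | .proj V0 q => .proj V0 (tq q)

/-- Translation of LPEs into simple LPEs computing the `adom`-restriction. -/
def tl : LPE → LPE
  | .eps => .eps
  | .pat lp => wrapL (.sub 0 (.base .eps (Glp lp)))
  | .seq l1 l2 => .sub 0 (.qand (.base (tl l1) (.graphV 1 .empty))
      (.seedV 1 (.base (tl l2) (.graphV 0 .empty))))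
  | .alt l1 l2 => .sub 0 (.qunion (.base (tl l1) (.graphV 0 .empty))
      (.base (tl l2) (.graphV 0 .empty)))
  | .star l => .star (tl l)
  | .test l => .sub 0 (.qand (.base .eps (.graphV 0 .empty)) (neL l))
  | .sub v q => wrapL (.sub v (tq q))

/-- A query which is nonempty (at a singleton seed) iff the LPE has a
nonempty result. -/
def neL : LPE → LDQL
  | .eps => .proj ∅ (.base .eps (.graphV 0 .empty))
  | .pat lp => .proj ∅ (.base (wrapL (.sub 0 (.base .eps (Glp lp))))
      (.graphV 0 .empty))
  | .seq l1 l2 => .proj ∅ (.qand (.base (tl l1) (.graphV 0 .empty))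
      (.seedV 0 (neL l2)))
  | .alt l1 l2 => .qunion (neL l1) (neL l2)
  | .star _ => .proj ∅ (.base .eps (.graphV 0 .empty))
  | .test l => neL l
  | .sub v q => .proj ∅ (.qand (.base .eps (.graphV (v+1) .empty))
      (.qand (.proj {v} (Bnd v (tq q))) (.seedV v qT)))
end

lemma compatible_single_ne {v w : Var} (h : v ≠ w) (a b : Obj) :
    compatible (single v a) (single w b) := by
  intro x p q hp hq
  rw [single_eq_some] at hp hq
  exact absurd (hp.1.symm.trans hq.1) h

mutual

theorem tq_spec (q : LDQL) (W : Web) (S : Set URI) :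
    evalQ W (tq q) S = evalQ W q S := by
  match q with
  | .base l P =>
      simp only [tq]
      rw [evalQ, evalQ]
      have hset : {u' | ∃ a ∈ S, u' ∈ evalL W (tl l) a}
          = {u' | ∃ a ∈ S, u' ∈ evalL W l a} ∩ adom W := by
        ext x
        simp only [Set.mem_setOf_eq, Set.mem_inter_iff]
        constructor
        · rintro ⟨a, ha, hx⟩
          rw [tl_spec l W a] at hx
          exact ⟨⟨a, ha, hx.1⟩, hx.2⟩
        · rintro ⟨⟨a, ha, hx⟩, hd⟩
          exact ⟨a, ha, by rw [tl_spec l W a]; exact ⟨hx, hd⟩⟩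
      rw [hset, datasetW_inter_adom]
  | .seedU U0 q' =>
      simp only [tq]; rw [evalQ, evalQ, tq_spec q' W ↑U0]
  | .seedV v q' =>
      simp only [tq]; rw [evalQ, evalQ]
      exact Set.iUnion_congr fun u => by rw [tq_spec q' W {u}]
  | .qand q1 q2 =>
      simp only [tq]; rw [evalQ, evalQ, tq_spec q1 W S, tq_spec q2 W S]
  | .qunion q1 q2 =>
      simp only [tq]; rw [evalQ, evalQ, tq_spec q1 W S, tq_spec q2 W S]
  | .proj V0 q' =>
      simp only [tq]; rw [evalQ, evalQ, tq_spec q' W S]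

theorem tl_spec (l : LPE) (W : Web) (u : URI) :
    evalL W (tl l) u = evalL W l u ∩ adom W := by
  match l with
  | .eps =>
      simp only [tl]
      by_cases h : (W.adoc u).isSome
      · have he : evalL W LPE.eps u = {u} := by rw [evalL, if_pos h]
        rw [he]
        ext x
        simp only [Set.mem_inter_iff, Set.mem_singleton_iff]
        constructor
        · rintro rfl; exact ⟨rfl, h⟩
        · exact And.left
      · rw [evalL_none W _ u (Option.not_isSome_iff_eq_none.mp h)]; simp
  | .pat lp => simp only [tl]; exact pat_translation W lp u
  | .seq l1 l2 =>
      simp only [tl]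
      by_cases h : (W.adoc u).isSome
      · have hA : evalQ W (.base (tl l1) (.graphV 1 .empty)) {u}
            = {m | ∃ x ∈ evalL W l1 u ∩ adom W, m = single 1 (.uri x)} := by
          rw [evalQ_baseGraphV, tl_spec l1 W u, Set.inter_assoc, Set.inter_self]
        have hB : evalQ W (.seedV 1 (.base (tl l2) (.graphV 0 .empty))) {u}
            = {m | ∃ a, ∃ b ∈ evalL W l2 a ∩ adom W,
                m = munion (single 0 (.uri b)) (single 1 (.uri a))} := by
          rw [evalQ]
          ext m
          simp only [Set.mem_iUnion, Set.mem_setOf_eq]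
          constructor
          · rintro ⟨a, μ1, hμ1, μ2, hμ2, hc, rfl⟩
            rw [evalQ_baseGraphV, tl_spec l2 W a] at hμ1
            obtain ⟨b, hb, rfl⟩ := hμ1
            simp only [Set.mem_singleton_iff] at hμ2; subst hμ2
            exact ⟨a, b, hb.1, rfl⟩
          · rintro ⟨a, b, hb, rfl⟩
            refine ⟨a, single 0 (.uri b), ?_, single 1 (.uri a), rfl,
              compatible_single_ne (by decide) _ _, rfl⟩
            rw [evalQ_baseGraphV, tl_spec l2 W a]
            exact ⟨b, ⟨hb, hb.2⟩, rfl⟩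
        have hL : evalL W (.sub 0 (.qand (.base (tl l1) (.graphV 1 .empty))
            (.seedV 1 (.base (tl l2) (.graphV 0 .empty))))) u
            = {u' | (W.adoc u).isSome ∧
                ∃ μ ∈ evalQ W (.qand (.base (tl l1) (.graphV 1 .empty))
                  (.seedV 1 (.base (tl l2) (.graphV 0 .empty)))) {u},
                  μ 0 = some (.uri u')} := by rw [evalL]
        have hR : evalL W (.seq l1 l2) u
            = {u'' | ∃ u', u' ∈ evalL W l1 u ∧ u'' ∈ evalL W l2 u'} := by
          rw [evalL]
        rw [hL, hR, evalQ, hA, hB]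
        ext u'
        simp only [Set.mem_setOf_eq, Set.mem_inter_iff]
        constructor
        · rintro ⟨hS, μ, hμ, h0⟩
          obtain ⟨μ1, hμ1, μ2, hμ2, hc, rfl⟩ := hμ
          obtain ⟨a, ha, rfl⟩ := hμ1
          obtain ⟨a', b, hb, rfl⟩ := hμ2
          have haa : a = a' := by
            have h2 : munion (single 0 (.uri b)) (single 1 (.uri a')) 1
                = some (.uri a') := by
              rw [munion_apply_left_none (single_other _ (by decide)), single_self]
            exact Obj.uri.inj (hc 1 _ _ (single_self _ _) h2)
          subst haa
          have h0' : munion (single 1 (.uri a))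
              (munion (single 0 (.uri b)) (single 1 (.uri a))) 0 = some (.uri b) := by
            rw [munion_apply_left_none (single_other _ (by decide)),
              munion_apply_left_some (single_self _ _)]
          rw [h0'] at h0
          obtain rfl : b = u' := Obj.uri.inj (Option.some.inj h0)
          exact ⟨⟨a, ha.1, hb.1⟩, hb.2⟩
        · rintro ⟨⟨a, ha1, ha2⟩, hdom⟩
          have hadom : (W.adoc a).isSome :=
            evalL_nonempty_dom (Set.nonempty_iff_ne_empty.mp ⟨u', ha2⟩)
          refine ⟨h, munion (single 1 (.uri a))
              (munion (single 0 (.uri u')) (single 1 (.uri a))),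
            ⟨single 1 (.uri a), ⟨a, ⟨ha1, hadom⟩, rfl⟩,
              munion (single 0 (.uri u')) (single 1 (.uri a)),
              ⟨a, u', ⟨ha2, hdom⟩, rfl⟩,
              compatible_single_munion (by decide), rfl⟩, ?_⟩
          rw [munion_apply_left_none (single_other _ (by decide)),
            munion_apply_left_some (single_self _ _)]
      · have h0 := Option.not_isSome_iff_eq_none.mp h
        rw [evalL_none W _ u h0, evalL_none W _ u h0]; simp
  | .alt l1 l2 =>
      simp only [tl]
      by_cases h : (W.adoc u).isSome
      · have hL : evalL W (.sub 0 (.qunion (.base (tl l1) (.graphV 0 .empty))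
            (.base (tl l2) (.graphV 0 .empty)))) u
            = {u' | (W.adoc u).isSome ∧
                ∃ μ ∈ evalQ W (.qunion (.base (tl l1) (.graphV 0 .empty))
                  (.base (tl l2) (.graphV 0 .empty))) {u},
                  μ 0 = some (.uri u')} := by rw [evalL]
        have hR : evalL W (.alt l1 l2) u = evalL W l1 u ∪ evalL W l2 u := by
          rw [evalL]
        rw [hL, hR, evalQ, evalQ_baseGraphV, evalQ_baseGraphV,
          tl_spec l1 W u, tl_spec l2 W u]
        ext u'
        simp only [Set.mem_setOf_eq, Set.mem_inter_iff, Set.mem_union]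
        constructor
        · rintro ⟨hS, μ, hμ, h0⟩
          rcases hμ with ⟨x, hx, rfl⟩ | ⟨x, hx, rfl⟩ <;>
            · rw [single_self] at h0
              obtain rfl : x = u' := Obj.uri.inj (Option.some.inj h0)
              first
                | exact ⟨Or.inl hx.1.1, hx.1.2⟩
                | exact ⟨Or.inr hx.1.1, hx.1.2⟩
        · rintro ⟨hu, hdom⟩
          rcases hu with h1 | h1
          · exact ⟨h, single 0 (.uri u'),
              Or.inl ⟨u', ⟨⟨h1, hdom⟩, hdom⟩, rfl⟩, by rw [single_self]⟩
          · exact ⟨h, single 0 (.uri u'),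
              Or.inr ⟨u', ⟨⟨h1, hdom⟩, hdom⟩, rfl⟩, by rw [single_self]⟩
      · have h0 := Option.not_isSome_iff_eq_none.mp h
        rw [evalL_none W _ u h0, evalL_none W _ u h0]; simp
  | .star l' =>
      simp only [tl]
      have hL : evalL W (.star (tl l')) u
          = {u' | (W.adoc u).isSome ∧
              Relation.ReflTransGen (fun a b => b ∈ evalL W (tl l') a) u u'} := by
        rw [evalL]
      have hR : evalL W (.star l') u
          = {u' | (W.adoc u).isSome ∧
              Relation.ReflTransGen (fun a b => b ∈ evalL W l' a) u u'} := by
        rw [evalL]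
      rw [hL, hR]
      ext u'
      simp only [Set.mem_setOf_eq, Set.mem_inter_iff]
      constructor
      · rintro ⟨hS, hr⟩
        refine ⟨⟨hS, Relation.ReflTransGen.mono (fun a b hb => ?_) _ _ hr⟩, ?_⟩
        · rw [tl_spec l' W a] at hb; exact hb.1
        · rcases Relation.ReflTransGen.cases_tail hr with heq | ⟨c, _, hstep⟩
          · subst heq; exact hS
          · rw [tl_spec l' W c] at hstep; exact hstep.2
      · rintro ⟨⟨hS, hr⟩, hdom⟩
        refine ⟨hS, ?_⟩
        revert hdom
        induction hr with
        | refl => intro _; exact Relation.ReflTransGen.refl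
        | @tail b c h1 h2 ih =>
            intro hdc
            have hbdom : (W.adoc b).isSome :=
              evalL_nonempty_dom (Set.nonempty_iff_ne_empty.mp ⟨c, h2⟩)
            exact (ih hbdom).tail (by rw [tl_spec l' W b]; exact ⟨h2, hdc⟩)
  | .test l' =>
      simp only [tl]
      have hT : evalL W (.test l') u = {u' | u' = u ∧ evalL W l' u ≠ ∅} := by
        rw [evalL]
      have hL : evalL W (.sub 0 (.qand (.base .eps (.graphV 0 .empty)) (neL l'))) u
          = {u' | (W.adoc u).isSome ∧
              ∃ μ ∈ evalQ W (.qand (.base .eps (.graphV 0 .empty)) (neL l')) {u},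
                μ 0 = some (.uri u')} := by rw [evalL]
      by_cases hne : evalL W l' u = ∅
      · have hq : evalQ W (.qand (.base .eps (.graphV 0 .empty)) (neL l')) {u} = ∅ := by
          rw [evalQ, neL_spec l' W u, if_pos hne, mjoin_empty_right]
        rw [hL, hT, hq]
        ext u'; simp [hne]
      · have hudom : (W.adoc u).isSome := evalL_nonempty_dom hne
        have heps : evalL W LPE.eps u = {u} := by rw [evalL, if_pos hudom]
        have hq : evalQ W (.qand (.base .eps (.graphV 0 .empty)) (neL l')) {u}
            = {single 0 (.uri u)} := by
          rw [evalQ, neL_spec l' W u, if_neg hne, mjoin_emptyMap_right,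
            evalQ_baseGraphV, heps]
          ext m
          simp only [Set.mem_setOf_eq, Set.mem_singleton_iff, Set.mem_inter_iff]
          constructor
          · rintro ⟨x, ⟨hx, _⟩, rfl⟩
            obtain rfl : x = u := hx
            rfl
          · rintro rfl
            exact ⟨u, ⟨rfl, hudom⟩, rfl⟩
        rw [hL, hT, hq]
        ext u'
        simp only [Set.mem_setOf_eq, Set.mem_inter_iff, Set.mem_singleton_iff]
        constructor
        · rintro ⟨hS, μ, rfl, h0⟩
          rw [single_self] at h0
          obtain rfl : u = u' := Obj.uri.inj (Option.some.inj h0)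
          exact ⟨⟨rfl, hne⟩, hudom⟩
        · rintro ⟨⟨rfl, _⟩, hdom⟩
          exact ⟨hudom, single 0 (.uri u'), rfl, by rw [single_self]⟩
  | .sub v q =>
      simp only [tl]
      rw [wrapL_sem]
      have hq : evalL W (.sub v (tq q)) u = evalL W (.sub v q) u := by
        rw [evalL, evalL, tq_spec q W {u}]
      rw [hq]

theorem neL_spec (l : LPE) (W : Web) (u : URI) :
    evalQ W (neL l) {u} = if evalL W l u = ∅ then ∅ else {emptyMap} := by
  match l with
  | .eps =>
      simp only [neL]
      rw [proj_empty_eval]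
      refine if_congr ?_ rfl rfl
      rw [baseGraphV_empty_iff]
      by_cases h : (W.adoc u).isSome
      · have he : evalL W LPE.eps u = {u} := by rw [evalL, if_pos h]
        rw [he]
        constructor
        · intro hc
          exfalso
          rw [Set.eq_empty_iff_forall_notMem] at hc
          exact hc u ⟨rfl, h⟩
        · intro hc; exact absurd hc (by simp)
      · rw [evalL_none W _ u (Option.not_isSome_iff_eq_none.mp h)]; simp
  | .pat lp =>
      simp only [neL]
      rw [proj_empty_eval]
      refine if_congr ?_ rfl rfl
      rw [baseGraphV_empty_iff, pat_translation, Set.inter_assoc, Set.inter_self,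
        Set.inter_eq_self_of_subset_left (evalL_pat_subset W lp u)]
  | .seq l1 l2 =>
      simp only [neL]
      rw [proj_empty_eval]
      refine if_congr ?_ rfl rfl
      have hR : evalL W (.seq l1 l2) u
          = {u'' | ∃ u', u' ∈ evalL W l1 u ∧ u'' ∈ evalL W l2 u'} := by rw [evalL]
      rw [evalQ, hR]
      constructor
      · intro hc
        rw [Set.eq_empty_iff_forall_notMem] at hc ⊢
        rintro x ⟨a, ha, hx2⟩
        have hne2 : evalL W l2 a ≠ ∅ := Set.nonempty_iff_ne_empty.mp ⟨x, hx2⟩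
        have hadom : (W.adoc a).isSome := evalL_nonempty_dom hne2
        apply hc (single 0 (.uri a))
        refine ⟨single 0 (.uri a), ?_, single 0 (.uri a), ?_,
          compatible_self _, (munion_self _).symm⟩
        · rw [evalQ_baseGraphV, tl_spec l1 W u]
          exact ⟨a, ⟨⟨ha, hadom⟩, hadom⟩, rfl⟩
        · rw [evalQ]
          refine Set.mem_iUnion.mpr ⟨a, ?_⟩
          rw [neL_spec l2 W a, if_neg hne2, mjoin_emptyMap_left]
          rfl
      · intro hc
        rw [Set.eq_empty_iff_forall_notMem]
        rintro μ ⟨μ1, hμ1, μ2, hμ2, hcomp, rfl⟩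
        rw [evalQ_baseGraphV, tl_spec l1 W u] at hμ1
        obtain ⟨a, ha, rfl⟩ := hμ1
        rw [evalQ] at hμ2
        obtain ⟨a', hμ2⟩ := Set.mem_iUnion.mp hμ2
        rw [neL_spec l2 W a'] at hμ2
        by_cases h2 : evalL W l2 a' = ∅
        · rw [if_pos h2, mjoin_empty_left] at hμ2; exact hμ2
        · rw [if_neg h2, mjoin_emptyMap_left] at hμ2
          simp only [Set.mem_singleton_iff] at hμ2; subst hμ2
          have haa : a = a' :=
            Obj.uri.inj (hcomp 0 _ _ (single_self _ _) (single_self _ _))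
          subst haa
          obtain ⟨x, hx⟩ := Set.nonempty_iff_ne_empty.mpr h2
          have hmem : x ∈ evalL W (.seq l1 l2) u := by
            rw [hR]; exact ⟨a, ha.1.1, hx⟩
          rw [hR, hc] at hmem
          exact hmem
  | .alt l1 l2 =>
      simp only [neL]
      have hR : evalL W (.alt l1 l2) u = evalL W l1 u ∪ evalL W l2 u := by rw [evalL]
      rw [evalQ, neL_spec l1 W u, neL_spec l2 W u, hR]
      by_cases h1 : evalL W l1 u = ∅ <;> by_cases h2 : evalL W l2 u = ∅ <;>
        simp [h1, h2, Set.union_empty_iff]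
  | .star l' =>
      simp only [neL]
      rw [proj_empty_eval]
      refine if_congr ?_ rfl rfl
      rw [baseGraphV_empty_iff]
      by_cases h : (W.adoc u).isSome
      · have he : evalL W LPE.eps u = {u} := by rw [evalL, if_pos h]
        rw [he]
        constructor
        · intro hc
          exfalso
          rw [Set.eq_empty_iff_forall_notMem] at hc
          exact hc u ⟨rfl, h⟩
        · intro hc
          exfalso
          rw [evalL, Set.eq_empty_iff_forall_notMem] at hc
          exact hc u ⟨h, Relation.ReflTransGen.refl⟩
      · have h0 := Option.not_isSome_iff_eq_none.mp h
        rw [evalL_none W _ u h0, evalL_none W _ u h0]; simp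
  | .test l' =>
      simp only [neL]
      rw [neL_spec l' W u]
      refine if_congr ?_ rfl rfl
      have ht : evalL W (.test l') u = {u' | u' = u ∧ evalL W l' u ≠ ∅} := by
        rw [evalL]
      rw [ht]
      by_cases h : evalL W l' u = ∅
      · exact iff_of_true h (by ext x; simp [h])
      · refine iff_of_false h ?_
        rw [Set.eq_empty_iff_forall_notMem]
        intro hforall
        exact hforall u ⟨rfl, h⟩
  | .sub v q =>
      simp only [neL]
      rw [proj_empty_eval]
      refine if_congr ?_ rfl rfl
      have hsub : evalL W (.sub v q) u
          = {u' | (W.adoc u).isSome ∧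
              ∃ μ ∈ evalQ W q {u}, μ v = some (.uri u')} := by rw [evalL]
      rw [evalQ, hsub]
      constructor
      · intro hc
        rw [Set.eq_empty_iff_forall_notMem] at hc ⊢
        rintro u' ⟨hS, μ, hμ, hv⟩
        have heps : evalL W LPE.eps u = {u} := by rw [evalL, if_pos hS]
        have hres : restrictV {v} μ = single v (.uri u') := by
          funext x
          by_cases hx : x = v
          · subst hx; simp [restrictV, hv, single]
          · simp [restrictV, hx, single]
        apply hc (munion (single (v+1) (.uri u)) (single v (.uri u')))
        refine ⟨single (v+1) (.uri u), ?_, single v (.uri u'), ?_,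
          compatible_single_ne (Nat.succ_ne_self v) _ _, rfl⟩
        · rw [evalQ_baseGraphV, heps]
          exact ⟨u, ⟨rfl, hS⟩, rfl⟩
        · refine ⟨single v (.uri u'), ?_, single v (.uri u'), ?_,
            compatible_self _, (munion_self _).symm⟩
          · rw [evalQ]
            refine ⟨μ, ?_, hres⟩
            rw [Bnd_spec, tq_spec q W {u}]
            exact ⟨hμ, by rw [hv]; simp⟩
          · rw [evalQ]
            refine Set.mem_iUnion.mpr ⟨u', ?_⟩
            rw [evalQ_qT, mjoin_emptyMap_left]
            rfl
      · intro hc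
        rw [Set.eq_empty_iff_forall_notMem]
        rintro μ ⟨μ1, hμ1, μ23, hμ23, hcomp, rfl⟩
        obtain ⟨μ2, hμ2, μ3, hμ3, hcomp2, rfl⟩ := hμ23
        rw [evalQ_baseGraphV] at hμ1
        obtain ⟨x, hx, rfl⟩ := hμ1
        have hS : (W.adoc u).isSome :=
          evalL_nonempty_dom (Set.nonempty_iff_ne_empty.mp ⟨x, hx.1⟩)
        rw [evalQ] at hμ2
        obtain ⟨μ', hμ', rfl⟩ := hμ2
        rw [Bnd_spec, tq_spec q W {u}] at hμ'
        rw [evalQ] at hμ3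
        obtain ⟨y, hμ3⟩ := Set.mem_iUnion.mp hμ3
        rw [evalQ_qT, mjoin_emptyMap_left] at hμ3
        simp only [Set.mem_singleton_iff] at hμ3; subst hμ3
        obtain ⟨o, ho⟩ := Option.ne_none_iff_exists'.mp hμ'.2
        have h2v : restrictV {v} μ' v = some o := by simp [restrictV, ho]
        have hoy : o = .uri y := hcomp2 v _ _ h2v (single_self _ _)
        have hmem : y ∈ evalL W (.sub v q) u := by
          rw [evalL]
          exact ⟨hS, μ', hμ'.1, by rw [ho, hoy]⟩
        rw [hsub, hc] at hmem
        exact hmem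

end

mutual

theorem tq_simple (q : LDQL) : (tq q).simple := by
  match q with
  | .base l P => simp only [tq, LDQL.simple]; exact tl_simple l
  | .seedU U0 q' => simp only [tq, LDQL.simple]; exact tq_simple q'
  | .seedV v q' => simp only [tq, LDQL.simple]; exact tq_simple q'
  | .qand q1 q2 =>
      simp only [tq, LDQL.simple]; exact ⟨tq_simple q1, tq_simple q2⟩
  | .qunion q1 q2 =>
      simp only [tq, LDQL.simple]; exact ⟨tq_simple q1, tq_simple q2⟩
  | .proj V0 q' => simp only [tq, LDQL.simple]; exact tq_simple q'

theorem tl_simple (l : LPE) : (tl l).simple := by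
  match l with
  | .eps => simp only [tl, LPE.simple]
  | .pat lp =>
      simp only [tl]
      exact wrapL_simple (by simp [LPE.simple, LDQL.simple])
  | .seq l1 l2 =>
      simp only [tl, LPE.simple, LDQL.simple]
      exact ⟨tl_simple l1, tl_simple l2⟩
  | .alt l1 l2 =>
      simp only [tl, LPE.simple, LDQL.simple]
      exact ⟨tl_simple l1, tl_simple l2⟩
  | .star l' => simp only [tl, LPE.simple]; exact tl_simple l'
  | .test l' =>
      simp only [tl, LPE.simple, LDQL.simple]
      exact ⟨trivial, neL_simple l'⟩
  | .sub v q =>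
      simp only [tl]
      exact wrapL_simple (by simp only [LPE.simple]; exact tq_simple q)

theorem neL_simple (l : LPE) : (neL l).simple := by
  match l with
  | .eps => simp [neL, LPE.simple, LDQL.simple]
  | .pat lp => simp [neL, LPE.simple, LDQL.simple, wrapL, Glp]
  | .seq l1 l2 =>
      simp only [neL, LDQL.simple, LPE.simple]
      exact ⟨tl_simple l1, neL_simple l2⟩
  | .alt l1 l2 =>
      simp only [neL, LDQL.simple]
      exact ⟨neL_simple l1, neL_simple l2⟩
  | .star l' => simp [neL, LPE.simple, LDQL.simple]
  | .test l' => simp only [neL]; exact neL_simple l'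
  | .sub v q =>
      simp only [neL, LDQL.simple, LPE.simple, qT]
      exact ⟨trivial, Bnd_simple v (tq q) (tq_simple q), trivial⟩

end

end Statement8

/-- Every LDQL query is equivalent to one all of whose LPEs
are built only from `ε`, `⟨?v,q⟩` and `(·)*`. -/
theorem exists_equivalent_simple_LDQL (q : LDQL) :
    ∃ q' : LDQL,
      (∀ (W : Web) (S : Set URI), S.Finite → evalQ W q S = evalQ W q' S) ∧
      q'.simple :=
  ⟨tq q, fun W S _ => (tq_spec q W S).symm, tq_simple q⟩

end

end LDQLFormal
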